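/- Growth estimate for the potential A: assume A : ℝ^N × ℝ^N → ℝ is C¹ in the second variable with a = ∇_ξ A, A(x,0) = 0, and that there exist positive constants N₁, N₂ and continuous exponents 1 < p(·) < q(·) such that a(x,ξ)·ξ ≥ N₁|ξ|^{p(x)} for |ξ| ≥ 1, a(x,ξ)·ξ ≥ N₁|ξ|^{q(x)} for |ξ| ≤ 1, |a(x,ξ)| ≤ N₂|ξ|^{p(x)−1} for |ξ| ≥ 1, |a(x,ξ)| ≤ N₂|ξ|^{q(x)−1} for |ξ| ≤ 1, and a(x,ξ)·ξ ≤ s(x)A(x,ξ) with q(·) ≤ s(·). Then there exist positive constants M₁, M₂ such that M₁|ξ|^{p(x)} ≤ A(x,ξ) ≤ a(x,ξ)·ξ ≤ M₂|ξ|^{p(x)} for |ξ| > 1 and M₁|ξ|^{q(x)} ≤ A(x,ξ) ≤ a(x,ξ)·ξ ≤ M₂|ξ|^{q(x)} for |ξ| ≤ 1. -/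

import Mathlib

open MeasureTheory Filter Topology RealInnerProductSpace

/-- Auxiliary: convexity + gradient gives `A x ξ ≤ ⟪a x ξ, ξ⟫` when `A x 0 = 0`. -/
lemma aux_A_le_inner {N : ℕ}
    (A : EuclideanSpace ℝ (Fin N) → ℝ) (aξ : EuclideanSpace ℝ (Fin N))
    (ξ : EuclideanSpace ℝ (Fin N))
    (hA0 : A 0 = 0) (hconv : ConvexOn ℝ Set.univ A)
    (hgrad : HasGradientAt A aξ ξ) : A ξ ≤ ⟪aξ, ξ⟫ := by
  set g : ℝ → ℝ := fun t => A (t • ξ) with hg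
  have hgderiv : HasDerivAt g ⟪aξ, ξ⟫ 1 := by
    have h1 : HasDerivAt (fun t : ℝ => t • ξ) ξ 1 := by
      simpa using (hasDerivAt_id (1:ℝ)).smul_const ξ
    have h2 := hgrad.hasFDerivAt
    rw [show ξ = (1:ℝ) • ξ by simp] at h2
    have h3 := h2.comp_hasDerivAt 1 h1
    simp at h3
    exact h3
  have hgconv : ConvexOn ℝ Set.univ g := by
    have := hconv.comp_affineMap (AffineMap.lineMap (0 : EuclideanSpace ℝ (Fin N)) ξ)
    have heq : (A ∘ (AffineMap.lineMap (0 : EuclideanSpace ℝ (Fin N)) ξ)) = g := by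
      funext t
      simp [g, AffineMap.lineMap_apply]
    rw [heq] at this
    simpa using this
  have hslope := hgconv.slope_le_of_hasDerivAt (Set.mem_univ (0:ℝ)) (Set.mem_univ (1:ℝ))
    one_pos hgderiv
  have : slope g 0 1 = A ξ := by
    simp [slope_def_field, g, hA0]
  linarith [hslope, this ▸ hslope]

/-- growth estimate for the potential `A`. -/
theorem stmt7 {N : ℕ}
    (A : EuclideanSpace ℝ (Fin N) → EuclideanSpace ℝ (Fin N) → ℝ)
    (a : EuclideanSpace ℝ (Fin N) → EuclideanSpace ℝ (Fin N) → EuclideanSpace ℝ (Fin N))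
    (hA0 : ∀ x, A x 0 = 0)
    (hconv : ∀ x, ConvexOn ℝ Set.univ (A x))
    (hgrad : ∀ x ξ, HasGradientAt (A x) (a x ξ) ξ)
    (p q s : EuclideanSpace ℝ (Fin N) → ℝ)
    (hp1 : ∀ x, 1 < p x) (hpq : ∀ x, p x < q x) (hqs : ∀ x, q x ≤ s x)
    (sM : ℝ) (hsM : ∀ x, s x ≤ sM)
    (N₁ N₂ : ℝ) (hN₁ : 0 < N₁) (hN₂ : 0 < N₂)
    (hlow1 : ∀ x ξ, 1 ≤ ‖ξ‖ → N₁ * ‖ξ‖ ^ p x ≤ ⟪a x ξ, ξ⟫)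
    (hlow2 : ∀ x ξ, ‖ξ‖ ≤ 1 → N₁ * ‖ξ‖ ^ q x ≤ ⟪a x ξ, ξ⟫)
    (hup1 : ∀ x ξ, 1 ≤ ‖ξ‖ → ‖a x ξ‖ ≤ N₂ * ‖ξ‖ ^ (p x - 1))
    (hup2 : ∀ x ξ, ‖ξ‖ ≤ 1 → ‖a x ξ‖ ≤ N₂ * ‖ξ‖ ^ (q x - 1))
    (hs : ∀ x ξ, ⟪a x ξ, ξ⟫ ≤ s x * A x ξ) :
    ∃ M₁ > (0 : ℝ), ∃ M₂ > (0 : ℝ), ∀ x ξ,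
      (1 < ‖ξ‖ →
        M₁ * ‖ξ‖ ^ p x ≤ A x ξ ∧ A x ξ ≤ ⟪a x ξ, ξ⟫ ∧ ⟪a x ξ, ξ⟫ ≤ M₂ * ‖ξ‖ ^ p x) ∧
      (‖ξ‖ ≤ 1 →
        M₁ * ‖ξ‖ ^ q x ≤ A x ξ ∧ A x ξ ≤ ⟪a x ξ, ξ⟫ ∧ ⟪a x ξ, ξ⟫ ≤ M₂ * ‖ξ‖ ^ q x) := by
  have hsMpos : (0 : ℝ) < sM :=
    lt_of_lt_of_le (by linarith [hp1 0, hpq 0, hqs 0]) (hsM 0)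
  have hAle : ∀ x ξ, A x ξ ≤ ⟪a x ξ, ξ⟫ := fun x ξ =>
    aux_A_le_inner (A x) (a x ξ) ξ (hA0 x) (hconv x) (hgrad x ξ)
  refine ⟨N₁ / sM, div_pos hN₁ hsMpos, N₂, hN₂, fun x ξ => ?_⟩
  have hspos : (0 : ℝ) < s x := by linarith [hp1 x, hpq x, hqs x]
  constructor
  · intro hξ
    have hξ1 : 1 ≤ ‖ξ‖ := hξ.le
    have hlow := hlow1 x ξ hξ1
    have hinn_nonneg : (0:ℝ) ≤ ⟪a x ξ, ξ⟫ := by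
      have : (0:ℝ) ≤ N₁ * ‖ξ‖ ^ p x :=
        mul_nonneg hN₁.le (Real.rpow_nonneg (norm_nonneg ξ) _)
      linarith
    have hApos : (0:ℝ) ≤ A x ξ := by
      by_contra h
      push_neg at h
      have := hs x ξ
      nlinarith
    have hchain : ⟪a x ξ, ξ⟫ ≤ sM * A x ξ := by
      calc ⟪a x ξ, ξ⟫ ≤ s x * A x ξ := hs x ξ
        _ ≤ sM * A x ξ := by nlinarith [hsM x]
    refine ⟨?_, hAle x ξ, ?_⟩
    · rw [div_mul_eq_mul_div, div_le_iff₀ hsMpos]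
      calc N₁ * ‖ξ‖ ^ p x ≤ ⟪a x ξ, ξ⟫ := hlow
        _ ≤ sM * A x ξ := hchain
        _ = A x ξ * sM := by ring
    · calc ⟪a x ξ, ξ⟫ ≤ ‖a x ξ‖ * ‖ξ‖ := real_inner_le_norm _ _
        _ ≤ (N₂ * ‖ξ‖ ^ (p x - 1)) * ‖ξ‖ := by
            apply mul_le_mul_of_nonneg_right (hup1 x ξ hξ1) (norm_nonneg ξ)
        _ = N₂ * (‖ξ‖ ^ (p x - 1) * ‖ξ‖ ^ (1:ℝ)) := by
            rw [Real.rpow_one]; ring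
        _ = N₂ * ‖ξ‖ ^ p x := by
            rw [← Real.rpow_add (by linarith : (0:ℝ) < ‖ξ‖)]; ring_nf
  · intro hξ1
    have hlow := hlow2 x ξ hξ1
    have hinn_nonneg : (0:ℝ) ≤ ⟪a x ξ, ξ⟫ := by
      have : (0:ℝ) ≤ N₁ * ‖ξ‖ ^ q x :=
        mul_nonneg hN₁.le (Real.rpow_nonneg (norm_nonneg ξ) _)
      linarith
    have hApos : (0:ℝ) ≤ A x ξ := by
      by_contra h
      push_neg at h
      have := hs x ξ
      nlinarith
    have hchain : ⟪a x ξ, ξ⟫ ≤ sM * A x ξ := by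
      calc ⟪a x ξ, ξ⟫ ≤ s x * A x ξ := hs x ξ
        _ ≤ sM * A x ξ := by nlinarith [hsM x]
    refine ⟨?_, hAle x ξ, ?_⟩
    · rw [div_mul_eq_mul_div, div_le_iff₀ hsMpos]
      calc N₁ * ‖ξ‖ ^ q x ≤ ⟪a x ξ, ξ⟫ := hlow
        _ ≤ sM * A x ξ := hchain
        _ = A x ξ * sM := by ring
    · rcases eq_or_ne ξ 0 with rfl | hne
      · have hq0 : (0:ℝ) < q x := by linarith [hp1 x, hpq x]
        simp [Real.zero_rpow hq0.ne', inner_zero_right]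
      · have hnpos : (0:ℝ) < ‖ξ‖ := norm_pos_iff.mpr hne
        calc ⟪a x ξ, ξ⟫ ≤ ‖a x ξ‖ * ‖ξ‖ := real_inner_le_norm _ _
          _ ≤ (N₂ * ‖ξ‖ ^ (q x - 1)) * ‖ξ‖ := by
              apply mul_le_mul_of_nonneg_right (hup2 x ξ hξ1) (norm_nonneg ξ)
          _ = N₂ * (‖ξ‖ ^ (q x - 1) * ‖ξ‖ ^ (1:ℝ)) := by
              rw [Real.rpow_one]; ring
          _ = N₂ * ‖ξ‖ ^ q x := by
              rw [← Real.rpow_add hnpos]; ring_nf
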